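/- If all N cost matrices are equal to N·C for a single matrix C, then the discrete EOT value equals the standard optimal transport value: EOT_{(N·C,...,N·C)}(a,b) = W_C(a,b). -/

import Mathlib

open Finset

/-- Frobenius inner product of two matrices. -/
def dot {n m : ℕ} (P C : Matrix (Fin n) (Fin m) ℝ) : ℝ := ∑ i, ∑ j, P i j * C i j

/-- `P` is a coupling of the probability vectors `a` and `b`. -/
def IsCoupling {n m : ℕ} (a : Fin n → ℝ) (b : Fin m → ℝ)
    (P : Matrix (Fin n) (Fin m) ℝ) : Prop :=
  (∀ i j, 0 ≤ P i j) ∧ (∀ i, ∑ j, P i j = a i) ∧ (∀ j, ∑ i, P i j = b j)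

/-- Discrete optimal transport value. -/
noncomputable def W {n m : ℕ} (a : Fin n → ℝ) (b : Fin m → ℝ)
    (C : Matrix (Fin n) (Fin m) ℝ) : ℝ :=
  sInf {t | ∃ P, IsCoupling a b P ∧ t = dot P C}

/-- The constraint set `Γ^N_{a,b}` of coupling decompositions. -/
def Gamma (N : ℕ) {n m : ℕ} (a : Fin n → ℝ) (b : Fin m → ℝ) :
    Set (Fin N → Matrix (Fin n) (Fin m) ℝ) :=
  {P | (∀ k i j, 0 ≤ P k i j) ∧ (∀ i, ∑ k, ∑ j, P k i j = a i) ∧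
       (∀ j, ∑ k, ∑ i, P k i j = b j)}

/-- Discrete equitable optimal transport value. -/
noncomputable def EOT {N n m : ℕ} (a : Fin n → ℝ) (b : Fin m → ℝ)
    (C : Fin N → Matrix (Fin n) (Fin m) ℝ) : ℝ :=
  sInf {t | ∃ P ∈ Gamma N a b, t = ⨆ i, dot (P i) (C i)}

lemma dot_nonneg' {n m : ℕ} {P C : Matrix (Fin n) (Fin m) ℝ}
    (hP : ∀ i j, 0 ≤ P i j) (hC : ∀ i j, 0 ≤ C i j) : 0 ≤ dot P C := by
  refine Finset.sum_nonneg fun i _ => Finset.sum_nonneg fun j _ => mul_nonneg (hP i j) (hC i j)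

lemma dot_smul' {n m : ℕ} (c : ℝ) (P C : Matrix (Fin n) (Fin m) ℝ) :
    dot P (c • C) = c * dot P C := by
  simp only [dot, Matrix.smul_apply, Finset.mul_sum]
  exact Finset.sum_congr rfl fun i _ => Finset.sum_congr rfl fun j _ => by rw [smul_eq_mul]; ring

theorem stmt_4 (N n m : ℕ) (hN : 0 < N) (a : Fin n → ℝ) (b : Fin m → ℝ)
    (ha : a ∈ stdSimplex ℝ (Fin n)) (hb : b ∈ stdSimplex ℝ (Fin m))
    (C : Matrix (Fin n) (Fin m) ℝ) (hC : ∀ k l, 0 ≤ C k l) :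
    EOT a b (fun _ : Fin N => (N : ℝ) • C) = W a b C := by
  classical
  have hNe : Nonempty (Fin N) := ⟨⟨0, hN⟩⟩
  have hNR : (0:ℝ) < (N:ℝ) := by exact_mod_cast hN
  set S := {t | ∃ P ∈ Gamma N a b, t = ⨆ i, dot (P i) ((N:ℝ) • C)} with hS
  set T := {t | ∃ P, IsCoupling a b P ∧ t = dot P C} with hT
  -- T is nonempty via product coupling
  have hQ0 : IsCoupling a b (Matrix.of fun i j => a i * b j) := by
    refine ⟨fun i j => mul_nonneg (ha.1 i) (hb.1 j), fun i => ?_, fun j => ?_⟩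
    · simp [← Finset.mul_sum, hb.2]
    · simp [← Finset.sum_mul, ha.2]
  have hTne : T.Nonempty := ⟨_, _, hQ0, rfl⟩
  -- T ⊆ S
  have hTS : T ⊆ S := by
    rintro t ⟨Q, hQ, rfl⟩
    refine ⟨fun _ => ((N:ℝ)⁻¹) • Q, ⟨?_, ?_, ?_⟩, ?_⟩
    · intro k i j
      exact mul_nonneg (by positivity) (hQ.1 i j)
    · intro i
      simp [← Finset.mul_sum, hQ.2.1 i, Finset.sum_const, Matrix.smul_apply]
      field_simp
    · intro j
      simp [← Finset.mul_sum, hQ.2.2 j, Finset.sum_const, Matrix.smul_apply]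
      field_simp
    · have : dot (((N:ℝ)⁻¹) • Q) ((N:ℝ) • C) = dot Q C := by
        simp [dot, Matrix.smul_apply]
        congr 1; ext i; congr 1; ext j
        field_simp
      simp only [this]
      exact ciSup_const.symm
  -- bddBelow T by 0
  have hTbd : BddBelow T := by
    refine ⟨0, ?_⟩
    rintro t ⟨Q, hQ, rfl⟩
    exact dot_nonneg' hQ.1 hC
  have hSbd : BddBelow S := by
    refine ⟨0, ?_⟩
    rintro t ⟨P, hP, rfl⟩
    have hbdd : BddAbove (Set.range fun k => dot (P k) ((N:ℝ) • C)) :=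
      (Set.finite_range _).bddAbove
    refine le_trans ?_ (le_ciSup hbdd (Classical.arbitrary (Fin N)))
    exact dot_nonneg' (hP.1 _) (fun i j => by
      simpa [Matrix.smul_apply] using mul_nonneg hNR.le (hC i j))
  have hSne : S.Nonempty := hTne.mono hTS
  refine le_antisymm (csInf_le_csInf hSbd hTne hTS) ?_
  refine le_csInf hSne ?_
  rintro s ⟨P, hP, rfl⟩
  set Q : Matrix (Fin n) (Fin m) ℝ := Matrix.of fun i j => ∑ k, P k i j with hQdef
  have hQc : IsCoupling a b Q := by
    refine ⟨fun i j => ?_, fun i => ?_, fun j => ?_⟩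
    · simp only [hQdef, Matrix.of_apply]
      exact Finset.sum_nonneg fun k _ => hP.1 k i j
    · rw [← hP.2.1 i, Finset.sum_comm]; rfl
    · rw [← hP.2.2 j, Finset.sum_comm]; rfl
  have hbdd : BddAbove (Set.range fun k => dot (P k) ((N:ℝ) • C)) :=
    (Set.finite_range _).bddAbove
  have hsum : dot Q C = ∑ k, dot (P k) C := by
    simp only [dot, hQdef, Matrix.of_apply, Finset.sum_mul]
    rw [show (∑ i, ∑ j, ∑ k, P k i j * C i j) = ∑ i, ∑ k, ∑ j, P k i j * C i j from
      Finset.sum_congr rfl fun i _ =>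
        Finset.sum_comm (f := fun j k => P k i j * C i j),
      Finset.sum_comm]
  have key : dot Q C ≤ ⨆ k, dot (P k) ((N:ℝ) • C) := by
    rw [hsum]
    have h1 : ∀ k : Fin N, dot (P k) C ≤ (⨆ k, dot (P k) ((N:ℝ) • C)) / N := by
      intro k
      rw [le_div_iff₀ hNR]
      have := le_ciSup hbdd k
      rw [dot_smul'] at this
      linarith
    calc ∑ k, dot (P k) C ≤ ∑ _k : Fin N, (⨆ k, dot (P k) ((N:ℝ) • C)) / N :=
          Finset.sum_le_sum fun k _ => h1 k
      _ = ⨆ k, dot (P k) ((N:ℝ) • C) := by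
          rw [Finset.sum_const, Finset.card_fin, nsmul_eq_mul]; field_simp
  exact le_trans (csInf_le hTbd ⟨Q, hQc, rfl⟩) key
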